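/- arXiv:1804.00341 — 2 statements merged into one kernel-verified Lean document; each statement's English description precedes it below -/
import Mathlib

section
/- The proximal operator of the ℓ0-plus-quadratic penalty ψ(s) = α·[s ≠ 0] + β s² with α, β ≥ 0 and parameter γ > 0 is scaled hard thresholding: the minimum of γψ(s) + (1/2)(s − x)² over s is attained at s = x/(1 + 2γβ) if x² > 2γα(1 + 2γβ), and at s = 0 if x² < 2γα(1 + 2γβ). -/
/-- The ℓ0 penalty on ℝ. -/
noncomputable def l0pen (s : ℝ) : ℝ := if s ≠ 0 then 1 else 0

/-- The proximal operator of `ψ(s) = α·[s ≠ 0] + βs²` is scaled hard thresholding: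
the minimum of `γψ(s) + (1/2)(s − x)²` is attained at `s = x/(1 + 2γβ)` if
`x² > 2γα(1 + 2γβ)`, and at `s = 0` if `x² < 2γα(1 + 2γβ)`. -/
theorem l0_quadratic_prox_scaled_hard_thresholding (α β γ x : ℝ)
    (hα : 0 ≤ α) (hβ : 0 ≤ β) (hγ : 0 < γ) :
    (x ^ 2 > 2 * γ * α * (1 + 2 * γ * β) →
      ∀ s : ℝ,
        γ * (α * l0pen (x / (1 + 2 * γ * β)) + β * (x / (1 + 2 * γ * β)) ^ 2)
            + (1 / 2) * (x / (1 + 2 * γ * β) - x) ^ 2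
          ≤ γ * (α * l0pen s + β * s ^ 2) + (1 / 2) * (s - x) ^ 2) ∧
    (x ^ 2 < 2 * γ * α * (1 + 2 * γ * β) →
      ∀ s : ℝ,
        γ * (α * l0pen 0 + β * (0 : ℝ) ^ 2) + (1 / 2) * ((0 : ℝ) - x) ^ 2
          ≤ γ * (α * l0pen s + β * s ^ 2) + (1 / 2) * (s - x) ^ 2) := by
  have hD : (0 : ℝ) < 1 + 2 * γ * β := by positivity
  have hD' : (1 + 2 * γ * β) ≠ 0 := ne_of_gt hD
  constructor
  · intro hx s
    set t := x / (1 + 2 * γ * β) with ht_def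
    have ht : t * (1 + 2 * γ * β) = x := div_mul_cancel₀ x hD'
    have hx2 : x ^ 2 = (t * (1 + 2 * γ * β)) ^ 2 := by rw [ht]
    have hx0 : x ≠ 0 := by
      intro h
      rw [h] at hx
      nlinarith [mul_nonneg (mul_nonneg (by linarith : (0:ℝ) ≤ 2*γ) hα) hD.le]
    have hxd : t ≠ 0 := div_ne_zero hx0 hD'
    have h3 : 2 * γ * α < t ^ 2 * (1 + 2 * γ * β) := by
      rw [← mul_lt_mul_iff_of_pos_right hD]
      nlinarith [hx2]
    by_cases hs : s = 0
    · subst hs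
      simp only [l0pen, hxd, ne_eq, not_false_eq_true, if_true, not_true_eq_false, if_false]
      nlinarith [h3, hx2, ht, mul_nonneg (mul_nonneg hγ.le hβ) (sq_nonneg t)]
    · simp only [l0pen, hxd, hs, ne_eq, not_false_eq_true, if_true]
      have hts : t * (1 + 2 * γ * β) * s = x * s := by rw [ht]
      have htt : t * (1 + 2 * γ * β) * t = x * t := by rw [ht]
      nlinarith [ht, hx2, hts, htt, mul_nonneg hD.le (sq_nonneg (s - t))]
  · intro hx s
    by_cases hs : s = 0
    · subst hs; simp [l0pen]
    · simp only [l0pen, hs, ne_eq, not_false_eq_true, if_true, not_true_eq_false, if_false]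
      nlinarith [sq_nonneg ((1 + 2*γ*β) * s - x), hx, hD,
        mul_nonneg (mul_nonneg hγ.le hβ) (sq_nonneg s)]
end

section
/- Let ψ: ℝᵈ → ℝ be convex with L-Lipschitz subgradients, X a data matrix, γ = 1/‖X‖₂², and consider the proximal gradient iteration B_{k+1} = prox_{γψ}(B_k − γ Xᵀ(X B_k − X A_k)) with the Procrustes update for A_k. Then the objective f(A,B) = (1/2)‖X − X B Aᵀ‖_F² + ψ(B) decreases monotonically: f(A_{k+1}, B_{k+1}) − f(A_k, B_k) ≤ −(1/2)‖X‖₂² ‖B_k − B_{k+1}‖_F². -/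
open Matrix

noncomputable def frobSq {m n : ℕ} (M : Matrix (Fin m) (Fin n) ℝ) : ℝ :=
  ∑ i, ∑ j, (M i j) ^ 2

noncomputable def matIp {m n : ℕ} (M N : Matrix (Fin m) (Fin n) ℝ) : ℝ :=
  ∑ i, ∑ j, M i j * N i j

/-- The spectral (operator) norm of a matrix. -/
noncomputable def specNorm {m n : ℕ} (X : Matrix (Fin m) (Fin n) ℝ) : ℝ :=
  ‖LinearMap.toContinuousLinearMap (Matrix.toEuclideanLin X)‖

section Helpers

variable {m n : ℕ}

lemma matIp_eq_trace (M N : Matrix (Fin m) (Fin n) ℝ) : matIp M N = (Mᵀ * N).trace := by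
  simp only [matIp, Matrix.trace, Matrix.diag, Matrix.mul_apply, Matrix.transpose_apply]
  exact Finset.sum_comm

lemma matIp_comm (M N : Matrix (Fin m) (Fin n) ℝ) : matIp M N = matIp N M := by
  simp only [matIp]
  exact Finset.sum_congr rfl fun i _ => Finset.sum_congr rfl fun j _ => mul_comm _ _

lemma matIp_mulA {m a b : ℕ} (M : Matrix (Fin m) (Fin a) ℝ) (P : Matrix (Fin a) (Fin b) ℝ)
    (N : Matrix (Fin m) (Fin b) ℝ) : matIp (M * P) N = matIp M (N * Pᵀ) := by
  rw [matIp_eq_trace, matIp_eq_trace, Matrix.transpose_mul, Matrix.mul_assoc,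
    Matrix.trace_mul_comm, Matrix.mul_assoc]

lemma matIp_mulB {a b c : ℕ} (P : Matrix (Fin a) (Fin b) ℝ) (M : Matrix (Fin a) (Fin c) ℝ)
    (D : Matrix (Fin b) (Fin c) ℝ) : matIp (Pᵀ * M) D = matIp M (P * D) := by
  rw [matIp_eq_trace, matIp_eq_trace, Matrix.transpose_mul, Matrix.transpose_transpose,
    Matrix.mul_assoc]

lemma matIp_add_left (M N P : Matrix (Fin m) (Fin n) ℝ) :
    matIp (M + N) P = matIp M P + matIp N P := by
  simp [matIp, Matrix.add_apply, add_mul, Finset.sum_add_distrib]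

lemma matIp_add_right (M N P : Matrix (Fin m) (Fin n) ℝ) :
    matIp M (N + P) = matIp M N + matIp M P := by
  simp [matIp, Matrix.add_apply, mul_add, Finset.sum_add_distrib]

lemma matIp_sub_left (M N P : Matrix (Fin m) (Fin n) ℝ) :
    matIp (M - N) P = matIp M P - matIp N P := by
  simp [matIp, Matrix.sub_apply, sub_mul, Finset.sum_sub_distrib]

lemma matIp_sub_right (M N P : Matrix (Fin m) (Fin n) ℝ) :
    matIp M (N - P) = matIp M N - matIp M P := by
  simp [matIp, Matrix.sub_apply, mul_sub, Finset.sum_sub_distrib]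

lemma matIp_smul_left (c : ℝ) (M N : Matrix (Fin m) (Fin n) ℝ) :
    matIp (c • M) N = c * matIp M N := by
  simp [matIp, Matrix.smul_apply, smul_eq_mul, Finset.mul_sum, mul_assoc]

lemma matIp_smul_right (c : ℝ) (M N : Matrix (Fin m) (Fin n) ℝ) :
    matIp M (c • N) = c * matIp M N := by
  simp [matIp, Matrix.smul_apply, smul_eq_mul, Finset.mul_sum, mul_left_comm]

lemma frobSq_eq (M : Matrix (Fin m) (Fin n) ℝ) : frobSq M = matIp M M := by
  simp [frobSq, matIp, sq]

lemma frobSq_nonneg (M : Matrix (Fin m) (Fin n) ℝ) : 0 ≤ frobSq M := by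
  simp only [frobSq]
  positivity

lemma frobSq_add (M N : Matrix (Fin m) (Fin n) ℝ) :
    frobSq (M + N) = frobSq M + 2 * matIp M N + frobSq N := by
  simp only [frobSq_eq, matIp_add_left, matIp_add_right]
  rw [matIp_comm N M]; ring

lemma frobSq_neg (M : Matrix (Fin m) (Fin n) ℝ) : frobSq (-M) = frobSq M := by
  simp [frobSq, Matrix.neg_apply]

lemma matIp_neg_right (M N : Matrix (Fin m) (Fin n) ℝ) : matIp M (-N) = -matIp M N := by
  simp [matIp, Matrix.neg_apply, mul_neg, Finset.sum_neg_distrib]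

lemma frobSq_sub (M N : Matrix (Fin m) (Fin n) ℝ) :
    frobSq (M - N) = frobSq M - 2 * matIp M N + frobSq N := by
  rw [sub_eq_add_neg, frobSq_add, matIp_neg_right, frobSq_neg]; ring

lemma frobSq_smul (c : ℝ) (M : Matrix (Fin m) (Fin n) ℝ) :
    frobSq (c • M) = c ^ 2 * frobSq M := by
  simp [frobSq, Matrix.smul_apply, smul_eq_mul, mul_pow, Finset.mul_sum]

lemma euclid_norm_sq (u : Fin m → ℝ) :
    (∑ i, u i ^ 2) = ‖(WithLp.equiv 2 (Fin m → ℝ)).symm u‖ ^ 2 := by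
  rw [EuclideanSpace.norm_eq, Real.sq_sqrt (by positivity)]
  simp [Real.norm_eq_abs, sq_abs]

lemma frobSq_mul_le {n p q : ℕ} (X : Matrix (Fin n) (Fin p) ℝ)
    (D : Matrix (Fin p) (Fin q) ℝ) :
    frobSq (X * D) ≤ specNorm X ^ 2 * frobSq D := by
  have key : ∀ j : Fin q, ∑ i, ((X * D) i j) ^ 2 ≤ specNorm X ^ 2 * ∑ i, (D i j) ^ 2 := by
    intro j
    set v : EuclideanSpace ℝ (Fin p) := (WithLp.equiv 2 (Fin p → ℝ)).symm (fun i => D i j) with hv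
    have h1 : (WithLp.equiv 2 (Fin n → ℝ)).symm (fun i => (X * D) i j)
        = Matrix.toEuclideanLin X v := by
      have hcol : (fun i => (X * D) i j) = X *ᵥ (fun i => D i j) := by
        funext i
        simp [Matrix.mulVec, Matrix.mul_apply, dotProduct]
      rw [hv, hcol]; rfl
    have h2 : ‖Matrix.toEuclideanLin X v‖ ≤ specNorm X * ‖v‖ := by
      have := (LinearMap.toContinuousLinearMap (Matrix.toEuclideanLin X)).le_opNorm v
      simpa [specNorm] using this
    calc ∑ i, ((X * D) i j) ^ 2 = ‖(WithLp.equiv 2 (Fin n → ℝ)).symm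
          (fun i => (X * D) i j)‖ ^ 2 := euclid_norm_sq _
      _ = ‖Matrix.toEuclideanLin X v‖ ^ 2 := by rw [h1]
      _ ≤ (specNorm X * ‖v‖) ^ 2 := by
          apply pow_le_pow_left₀ (norm_nonneg _) h2
      _ = specNorm X ^ 2 * ‖v‖ ^ 2 := by ring
      _ = specNorm X ^ 2 * ∑ i, (D i j) ^ 2 := by rw [euclid_norm_sq]
  calc frobSq (X * D) = ∑ j, ∑ i, ((X * D) i j) ^ 2 := Finset.sum_comm
    _ ≤ ∑ j : Fin q, specNorm X ^ 2 * ∑ i, (D i j) ^ 2 :=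
        Finset.sum_le_sum fun j _ => key j
    _ = specNorm X ^ 2 * ∑ j, ∑ i, (D i j) ^ 2 := by rw [Finset.mul_sum]
    _ = specNorm X ^ 2 * frobSq D := by rw [frobSq]; rw [Finset.sum_comm]

lemma quad_expand {n p k : ℕ} (X : Matrix (Fin n) (Fin p) ℝ)
    (B A : Matrix (Fin p) (Fin k) ℝ) (hA : Aᵀ * A = 1) :
    frobSq (X - X * B * Aᵀ) = frobSq X - 2 * matIp (X * A) (X * B) + frobSq (X * B) := by
  rw [frobSq_sub]
  have h1 : matIp X (X * B * Aᵀ) = matIp (X * A) (X * B) := by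
    rw [matIp_comm, matIp_mulA, Matrix.transpose_transpose, matIp_comm]
  have h2 : frobSq (X * B * Aᵀ) = frobSq (X * B) := by
    rw [frobSq_eq, matIp_mulA, Matrix.transpose_transpose, Matrix.mul_assoc (X * B) Aᵀ A,
      hA, Matrix.mul_one, ← frobSq_eq]
  rw [h1, h2]

end Helpers

set_option maxHeartbeats 2000000 in
/-- Descent lemma for the variable-projected proximal gradient method for SPCA:
one iteration (prox step on `B` with step `γ = 1/‖X‖₂²`, followed by the
Procrustes update of `A`) decreases the objective
`f(A,B) = (1/2)‖X − XBAᵀ‖_F² + ψ(B)` by at least `(1/2)‖X‖₂²‖B_k − B_{k+1}‖_F²`. -/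
theorem spca_descent_lemma (n p k : ℕ)
    (X : Matrix (Fin n) (Fin p) ℝ)
    (ψ : Matrix (Fin p) (Fin k) ℝ → ℝ)
    (hψ : ConvexOn ℝ Set.univ ψ)
    (g : Matrix (Fin p) (Fin k) ℝ → Matrix (Fin p) (Fin k) ℝ)
    (hgsub : ∀ B C, ψ B + matIp (g B) (C - B) ≤ ψ C)
    (L : ℝ) (hL : 0 ≤ L)
    (hgLip : ∀ B C, frobSq (g B - g C) ≤ L ^ 2 * frobSq (B - C))
    (hX : 0 < specNorm X)
    (γ : ℝ) (hγ : γ = 1 / specNorm X ^ 2)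
    (A0 A1 B0 B1 : Matrix (Fin p) (Fin k) ℝ)
    (hA0orth : A0ᵀ * A0 = 1)
    (hA0 : ∀ A : Matrix (Fin p) (Fin k) ℝ, Aᵀ * A = 1 →
      frobSq (X - X * B0 * A0ᵀ) ≤ frobSq (X - X * B0 * Aᵀ))
    (hB1 : ∀ C : Matrix (Fin p) (Fin k) ℝ,
      γ * ψ B1 + (1 / 2) * frobSq (B1 - (B0 - γ • (Xᵀ * (X * B0 - X * A0))))
        ≤ γ * ψ C + (1 / 2) * frobSq (C - (B0 - γ • (Xᵀ * (X * B0 - X * A0)))))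
    (hA1orth : A1ᵀ * A1 = 1)
    (hA1 : ∀ A : Matrix (Fin p) (Fin k) ℝ, Aᵀ * A = 1 →
      frobSq (X - X * B1 * A1ᵀ) ≤ frobSq (X - X * B1 * Aᵀ)) :
    ((1 / 2) * frobSq (X - X * B1 * A1ᵀ) + ψ B1)
        - ((1 / 2) * frobSq (X - X * B0 * A0ᵀ) + ψ B0)
      ≤ -(1 / 2) * specNorm X ^ 2 * frobSq (B0 - B1) := by
  set s : ℝ := specNorm X ^ 2 with hs
  have hs0 : 0 < s := by positivity
  have hγ0 : 0 < γ := by rw [hγ]; positivity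
  have hγs : γ * s = 1 := by rw [hγ]; field_simp
  set G : Matrix (Fin p) (Fin k) ℝ := Xᵀ * (X * B0 - X * A0) with hG
  set Δ : Matrix (Fin p) (Fin k) ℝ := B1 - B0 with hΔ
  -- gradient inner product identity
  have hGΔ : matIp G Δ = matIp (X * B0 - X * A0) (X * Δ) := matIp_mulB _ _ _
  -- quadratic expansion step (Key 2)
  have hXΔ : X * Δ = X * B1 - X * B0 := by rw [hΔ, Matrix.mul_sub]
  have key2 : (1 / 2) * frobSq (X - X * B1 * A0ᵀ) - (1 / 2) * frobSq (X - X * B0 * A0ᵀ)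
      = matIp G Δ + (1 / 2) * frobSq (X * Δ) := by
    rw [quad_expand X B1 A0 hA0orth, quad_expand X B0 A0 hA0orth, hGΔ]
    have hB1exp : X * B1 = X * B0 + X * Δ := by rw [hXΔ]; abel
    rw [hB1exp, frobSq_add, matIp_add_right, matIp_sub_left]
    ring
  -- spectral bound (Key 3)
  have key3 : frobSq (X * Δ) ≤ s * frobSq Δ := frobSq_mul_le X Δ
  -- prox strong minimality (Key 4)
  set z : Matrix (Fin p) (Fin k) ℝ := B0 - γ • G with hz
  have hstrong : γ * ψ B1 + (1 / 2) * frobSq (B1 - z) + (1 / 2) * frobSq Δ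
      ≤ γ * ψ B0 + (1 / 2) * frobSq (B0 - z) := by
    set F : ℝ := frobSq Δ with hF
    have hF0 : 0 ≤ F := frobSq_nonneg _
    -- key inequality for every t ∈ (0,1]
    have kt : ∀ t : ℝ, 0 < t → t ≤ 1 →
        γ * ψ B1 + (1 / 2) * frobSq (B1 - z) + (1 / 2) * F
          ≤ γ * ψ B0 + (1 / 2) * frobSq (B0 - z) + (t / 2) * F := by
      intro t ht0 ht1
      set Ct : Matrix (Fin p) (Fin k) ℝ := B1 + t • (B0 - B1) with hCt
      have hconv : ψ Ct ≤ (1 - t) * ψ B1 + t * ψ B0 := by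
        have := hψ.2 (Set.mem_univ B1) (Set.mem_univ B0)
          (by linarith : (0:ℝ) ≤ 1 - t) (le_of_lt ht0) (by ring)
        have hCtEq : Ct = (1 - t) • B1 + t • B0 := by
          rw [hCt, smul_sub]; module
        rw [hCtEq]
        simpa [smul_eq_mul] using this
      have hCz : Ct - z = (B1 - z) + t • (B0 - B1) := by rw [hCt]; abel
      have hBz : B0 - z = (B1 - z) + (B0 - B1) := by abel
      have hFneg : frobSq (B0 - B1) = F := by
        rw [hF, hΔ, ← frobSq_neg (B0 - B1)]; congr 1; abel
      have e1 : frobSq (Ct - z) = frobSq (B1 - z)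
          + 2 * t * matIp (B1 - z) (B0 - B1) + t ^ 2 * F := by
        rw [hCz, frobSq_add, matIp_smul_right, frobSq_smul, hFneg]; ring
      have e2 : frobSq (B0 - z) = frobSq (B1 - z)
          + 2 * matIp (B1 - z) (B0 - B1) + F := by
        rw [hBz, frobSq_add, hFneg]
      have hprox := hB1 Ct
      -- hprox : γ ψ B1 + ... ≤ γ ψ Ct + (1/2) frobSq (Ct - z)
      have := hprox
      rw [e1] at this
      nlinarith [this, hconv, e2, mul_pos ht0 hγ0, sq_nonneg t, hF0,
        mul_le_mul_of_nonneg_left hconv (le_of_lt hγ0)]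
    -- take t → 0
    by_contra hcon
    push_neg at hcon
    set a := γ * ψ B1 + (1 / 2) * frobSq (B1 - z) + (1 / 2) * F
    set b := γ * ψ B0 + (1 / 2) * frobSq (B0 - z)
    have hε : 0 < a - b := by simp only [a, b] at hcon ⊢; linarith
    set t : ℝ := min 1 ((a - b) / (F + 1)) with htdef
    have ht0 : 0 < t := lt_min one_pos (by positivity)
    have ht1 : t ≤ 1 := min_le_left _ _
    have h2 := kt t ht0 ht1
    have htle : t ≤ (a - b) / (F + 1) := min_le_right _ _
    have : (t / 2) * F < a - b := by
      have hFp : (0:ℝ) < F + 1 := by linarith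
      have : t * F ≤ ((a - b) / (F + 1)) * F :=
        mul_le_mul_of_nonneg_right htle hF0
      have h3 : ((a - b) / (F + 1)) * F < a - b := by
        rw [div_mul_eq_mul_div, div_lt_iff₀ hFp]
        nlinarith
      nlinarith
    simp only [a, b] at h2 this
    linarith
  -- expand the frobSq terms in hstrong
  have hB1z : B1 - z = Δ + γ • G := by rw [hz, hΔ]; abel
  have hB0z : B0 - z = γ • G := by rw [hz]; abel
  have key4 : ψ B1 + matIp G Δ + s * frobSq Δ ≤ ψ B0 := by
    rw [hB1z, hB0z, frobSq_add, matIp_smul_right, frobSq_smul] at hstrong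
    -- hstrong: γψB1 + (1/2)(frobSq Δ + 2γ matIp Δ G + γ² frobSq G) + (1/2) frobSq Δ
    --          ≤ γψB0 + (1/2) γ² frobSq G
    have h5 : γ * ψ B1 + γ * matIp Δ G + frobSq Δ ≤ γ * ψ B0 := by nlinarith [hstrong]
    have h6 : matIp Δ G = matIp G Δ := matIp_comm _ _
    rw [h6] at h5
    -- divide by γ, using frobSq Δ = γ * (s * frobSq Δ)
    have h7 : frobSq Δ = γ * (s * frobSq Δ) := by
      rw [← mul_assoc, hγs, one_mul]
    rw [h7] at h5
    have := (mul_le_mul_iff_right₀ hγ0).mp (by linarith [h5] :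
      γ * (ψ B1 + matIp G Δ + s * frobSq Δ) ≤ γ * ψ B0)
    exact this
  -- Procrustes for A1
  have hProc : frobSq (X - X * B1 * A1ᵀ) ≤ frobSq (X - X * B1 * A0ᵀ) := hA1 A0 hA0orth
  have hΔsym : frobSq (B0 - B1) = frobSq Δ := by
    rw [hΔ, ← frobSq_neg (B0 - B1)]; congr 1; abel
  rw [hΔsym]
  have final : matIp G Δ + (1 / 2) * frobSq (X * Δ) + ψ B1 - ψ B0
      ≤ -(1 / 2) * s * frobSq Δ := by nlinarith [key3, key4]
  linarith [hProc, key2, final]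
end
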